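/- Assume η² > ζ² + ι²/β², set c = ((β²η² − ι²)/(β²ζ²) − 1)^{−1}, assume c < β(β²η² − ι²)^{−1/2}, and let N_thresh > 0 satisfy N_thresh^{−p} = ((β²η² − ι²)/(β²ζ²) − 1)^p β^{2p} (β²η² − ι²)^{−p} − β^p (β²η² − ι²)^{−p/2}. For N > N_thresh let x_N ∈ (0,1) be the unique solution of f_N(x_N) = c, and set A = 1/ζ² − β²/(β²η² − ι²) > 0. Then x_N converges, as N → ∞, to (A² + A)^{−1/2}/ζ. (Equivalently, the bifurcating shear angle θ̂(N) = arccos x_N converges to arccos((A² + A)^{−1/2}/ζ) as N → ∞.) -/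

import Mathlib

open Filter

/-- The function
`f_N(x) = [N^{−p} + ((1/ζ²)(1−x²) + (β²/(β²η² − ι²)) x²)^{p/2}]^{−1/p} · (β²/(β²η² − ι²)) x`. -/
noncomputable def fN (p β ζ η ι N x : ℝ) : ℝ :=
  (N ^ (-p) + ((1 / ζ ^ 2) * (1 - x ^ 2)
      + (β ^ 2 / (β ^ 2 * η ^ 2 - ι ^ 2)) * x ^ 2) ^ (p / 2)) ^ (-(1 / p))
    * (β ^ 2 / (β ^ 2 * η ^ 2 - ι ^ 2)) * x


private lemma fNaux_mono (p ζ A B N : ℝ) (hp : 0 < p) (hApos : 0 < A) (hB : 0 < B)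
    (hN : 0 < N) (hgpos : ∀ t : ℝ, 0 ≤ t → t ≤ 1 → 0 < 1 / ζ ^ 2 - A * t ^ 2)
    (a b : ℝ) (ha : 0 ≤ a) (hab : a ≤ b) (hb1 : b ≤ 1) :
    (N ^ (-p) + (1 / ζ ^ 2 - A * a ^ 2) ^ (p / 2)) ^ (-(1 / p)) * B * a
      ≤ (N ^ (-p) + (1 / ζ ^ 2 - A * b ^ 2) ^ (p / 2)) ^ (-(1 / p)) * B * b := by
  have hga : 0 < 1 / ζ ^ 2 - A * a ^ 2 := hgpos a ha (hab.trans hb1)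
  have hgb : 0 < 1 / ζ ^ 2 - A * b ^ 2 := hgpos b (ha.trans hab) hb1
  have hgle : 1 / ζ ^ 2 - A * b ^ 2 ≤ 1 / ζ ^ 2 - A * a ^ 2 := by
    have := mul_le_mul_of_nonneg_left (pow_le_pow_left₀ ha hab 2) hApos.le
    linarith only [this]
  have hNp : 0 < N ^ (-p) := Real.rpow_pos_of_pos hN _
  have h1 : (1 / ζ ^ 2 - A * b ^ 2) ^ (p / 2) ≤ (1 / ζ ^ 2 - A * a ^ 2) ^ (p / 2) :=
    Real.rpow_le_rpow hgb.le hgle (div_nonneg hp.le (by norm_num))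
  have hba : 0 < N ^ (-p) + (1 / ζ ^ 2 - A * b ^ 2) ^ (p / 2) :=
    add_pos hNp (Real.rpow_pos_of_pos hgb _)
  have h2 : (N ^ (-p) + (1 / ζ ^ 2 - A * a ^ 2) ^ (p / 2)) ^ (-(1 / p))
      ≤ (N ^ (-p) + (1 / ζ ^ 2 - A * b ^ 2) ^ (p / 2)) ^ (-(1 / p)) :=
    Real.rpow_le_rpow_of_nonpos hba (add_le_add le_rfl h1)
      (neg_nonpos.mpr (one_div_pos.mpr hp).le)
  have h3 : 0 < (N ^ (-p) + (1 / ζ ^ 2 - A * b ^ 2) ^ (p / 2)) ^ (-(1 / p)) :=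
    Real.rpow_pos_of_pos hba _
  have h4 : (N ^ (-p) + (1 / ζ ^ 2 - A * a ^ 2) ^ (p / 2)) ^ (-(1 / p)) * B
      ≤ (N ^ (-p) + (1 / ζ ^ 2 - A * b ^ 2) ^ (p / 2)) ^ (-(1 / p)) * B :=
    mul_le_mul_of_nonneg_right h2 hB.le
  exact mul_le_mul h4 hab ha (mul_nonneg h3.le hB.le)

private lemma fNaux_rpow_collapse (p : ℝ) (hp : 0 < p) (t : ℝ) (ht : 0 < t) :
    (t ^ (p / 2)) ^ (-(1 / p) : ℝ) = t ^ (-(1 / 2) : ℝ) := by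
  rw [← Real.rpow_mul ht.le]
  congr 1
  field_simp

private lemma fNaux_lt (p ζ A B N x0 : ℝ) (hp : 0 < p) (hN : 0 < N) (hB : 0 < B)
    (hx0pos : 0 < x0) (hg0 : 0 < 1 / ζ ^ 2 - A * x0 ^ 2) :
    (N ^ (-p) + (1 / ζ ^ 2 - A * x0 ^ 2) ^ (p / 2)) ^ (-(1 / p)) * B * x0
      < (1 / ζ ^ 2 - A * x0 ^ 2) ^ (-(1 / 2) : ℝ) * B * x0 := by
  have hG0 : 0 < (1 / ζ ^ 2 - A * x0 ^ 2) ^ (p / 2) := Real.rpow_pos_of_pos hg0 _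
  have hNp : 0 < N ^ (-p) := Real.rpow_pos_of_pos hN _
  have h1 : (N ^ (-p) + (1 / ζ ^ 2 - A * x0 ^ 2) ^ (p / 2)) ^ (-(1 / p))
      < ((1 / ζ ^ 2 - A * x0 ^ 2) ^ (p / 2)) ^ (-(1 / p) : ℝ) :=
    Real.rpow_lt_rpow_of_neg hG0 (lt_add_of_pos_left _ hNp)
      (neg_lt_zero.mpr (one_div_pos.mpr hp))
  rw [fNaux_rpow_collapse p hp _ hg0] at h1
  exact mul_lt_mul_of_pos_right (mul_lt_mul_of_pos_right h1 hB) hx0pos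

private lemma fNaux_tendsto (p ζ A B y : ℝ) (hp : 0 < p)
    (hgy : 0 < 1 / ζ ^ 2 - A * y ^ 2) :
    Filter.Tendsto (fun N : ℝ => (N ^ (-p) + (1 / ζ ^ 2 - A * y ^ 2) ^ (p / 2)) ^ (-(1 / p)) * B * y)
      Filter.atTop (nhds ((1 / ζ ^ 2 - A * y ^ 2) ^ (-(1 / 2) : ℝ) * B * y)) := by
  have hGy : 0 < (1 / ζ ^ 2 - A * y ^ 2) ^ (p / 2) := Real.rpow_pos_of_pos hgy _
  have h0 : Filter.Tendsto (fun N : ℝ => N ^ (-p) + (1 / ζ ^ 2 - A * y ^ 2) ^ (p / 2))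
      Filter.atTop (nhds (0 + (1 / ζ ^ 2 - A * y ^ 2) ^ (p / 2))) :=
    (tendsto_rpow_neg_atTop hp).add_const _
  rw [zero_add] at h0
  have h1 := h0.rpow_const (p := -(1 / p)) (Or.inl hGy.ne')
  have h2 := (h1.mul_const B).mul_const y
  rw [← fNaux_rpow_collapse p hp _ hgy]
  exact h2

set_option maxHeartbeats 1000000 in
private theorem shear_angle_limit_aux (p β ζ η ι : ℝ) (hp : 0 < p) (hβ : 0 < β) (hζ : 0 < ζ)
    (hη : 0 < η) (hβηι : 0 < β ^ 2 * η ^ 2 - ι ^ 2)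
    (hmat : ζ ^ 2 + ι ^ 2 / β ^ 2 < η ^ 2)
    (c : ℝ) (hc : c = ((β ^ 2 * η ^ 2 - ι ^ 2) / (β ^ 2 * ζ ^ 2) - 1)⁻¹)
    (hcsmall : c < β * (β ^ 2 * η ^ 2 - ι ^ 2) ^ (-(1 / 2) : ℝ))
    (Nthresh : ℝ) (hNt : 0 < Nthresh)
    (hNtdef : Nthresh ^ (-p)
      = ((β ^ 2 * η ^ 2 - ι ^ 2) / (β ^ 2 * ζ ^ 2) - 1) ^ p * β ^ (2 * p)
          * (β ^ 2 * η ^ 2 - ι ^ 2) ^ (-p)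
        - β ^ p * (β ^ 2 * η ^ 2 - ι ^ 2) ^ (-(p / 2)))
    (x : ℝ → ℝ)
    (hx : ∀ N : ℝ, Nthresh < N → x N ∈ Set.Ioo (0 : ℝ) 1 ∧ fN p β ζ η ι N (x N) = c)
    (A : ℝ) (hA : A = 1 / ζ ^ 2 - β ^ 2 / (β ^ 2 * η ^ 2 - ι ^ 2)) :
    Tendsto x atTop (nhds ((A ^ 2 + A) ^ (-(1 / 2) : ℝ) / ζ)) := by
  have hζ2 : (0:ℝ) < ζ ^ 2 := pow_pos hζ 2
  have hζ0 : (ζ:ℝ) ≠ 0 := hζ.ne'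
  have hD : (0:ℝ) < β ^ 2 * η ^ 2 - ι ^ 2 := hβηι
  obtain ⟨B, hBdef⟩ : ∃ B : ℝ, B = β ^ 2 / (β ^ 2 * η ^ 2 - ι ^ 2) := ⟨_, rfl⟩
  have hB : 0 < B := by rw [hBdef]; exact div_pos (pow_pos hβ 2) hD
  -- A positive
  have hβζD : β ^ 2 * ζ ^ 2 < β ^ 2 * η ^ 2 - ι ^ 2 := by
    have h1 : ι ^ 2 / β ^ 2 * β ^ 2 = ι ^ 2 := by field_simp
    linarith only [mul_lt_mul_of_pos_left hmat (pow_pos hβ 2), h1]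
  have hApos : 0 < A := by
    rw [hA, sub_pos, div_lt_div_iff₀ hD hζ2]
    linarith only [hβζD]
  have hAB : A + B = 1 / ζ ^ 2 := by rw [hA, hBdef]; ring
  -- c = B / A
  have hAne : A ≠ 0 := hApos.ne'
  have h1key : (β ^ 2 * η ^ 2 - ι ^ 2) / (β ^ 2 * ζ ^ 2) - 1
      = A * (β ^ 2 * η ^ 2 - ι ^ 2) / β ^ 2 := by
    rw [hA]; field_simp
  have hBcA : B = c * A := by
    rw [hc, h1key, inv_div, hBdef]
    field_simp
  have hc0 : 0 < c := by
    have h1 : 0 < c * A := hBcA ▸ hB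
    rcases mul_pos_iff.mp h1 with ⟨h, _⟩ | ⟨_, h⟩
    · exact h
    · linarith
  -- B < A ^ 2, from hcsmall
  have hsqB : β * (β ^ 2 * η ^ 2 - ι ^ 2) ^ (-(1 / 2) : ℝ) = Real.sqrt B := by
    rw [hBdef, Real.sqrt_div' (β ^ 2) ?hb, Real.sqrt_sq hβ.le, Real.rpow_neg hD.le,
      Real.sqrt_eq_rpow]
    · ring
    case hb => positivity
  have hBA2 : B < A ^ 2 := by
    rw [hsqB] at hcsmall
    have hs2 : Real.sqrt B ^ 2 = B := Real.sq_sqrt hB.le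
    have hs0 : 0 < Real.sqrt B := Real.sqrt_pos.mpr hB
    have h1 : c * A < Real.sqrt B * A := mul_lt_mul_of_pos_right hcsmall hApos
    have h2 : Real.sqrt B * Real.sqrt B < Real.sqrt B * A := by
      calc Real.sqrt B * Real.sqrt B = B := Real.mul_self_sqrt hB.le
        _ = c * A := hBcA
        _ < Real.sqrt B * A := h1
    have h3 : Real.sqrt B < A := lt_of_mul_lt_mul_left h2 hs0.le
    calc B = Real.sqrt B ^ 2 := hs2.symm
      _ < A ^ 2 := pow_lt_pow_left₀ h3 hs0.le (by norm_num)
  -- the limit point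
  obtain ⟨x0, hx0def⟩ : ∃ x0 : ℝ, x0 = (A ^ 2 + A) ^ (-(1 / 2) : ℝ) / ζ := ⟨_, rfl⟩
  rw [← hx0def]
  have hAA : (0:ℝ) < A ^ 2 + A := by positivity
  have hx0pos : 0 < x0 := hx0def ▸ div_pos (Real.rpow_pos_of_pos hAA _) hζ
  have hx0sq : x0 ^ 2 = (A ^ 2 + A)⁻¹ / ζ ^ 2 := by
    rw [hx0def, div_pow]
    congr 1
    rw [← Real.rpow_natCast ((A ^ 2 + A) ^ (-(1 / 2) : ℝ)) 2, ← Real.rpow_mul hAA.le]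
    norm_num [Real.rpow_neg_one]
  have hx0id : x0 ^ 2 * (ζ ^ 2 * (A ^ 2 + A)) = 1 := by
    rw [hx0sq]; field_simp
  have hx0lt1 : x0 < 1 := by
    have h1 : ζ ^ 2 * (A + B) = 1 := by rw [hAB]; field_simp
    have h2 : 1 < ζ ^ 2 * (A ^ 2 + A) := by
      have := mul_lt_mul_of_pos_left hBA2 hζ2
      linarith only [this, h1]
    have h3 : x0 ^ 2 < 1 := by
      linarith only [mul_pos (pow_pos hx0pos 2) (sub_pos.mpr h2), hx0id]
    have h4 : x0 ^ 2 < 1 ^ 2 := by simpa using h3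
    exact lt_of_pow_lt_pow_left₀ 2 zero_le_one h4
  -- key identity
  have hkey : c ^ 2 / ζ ^ 2 = x0 ^ 2 * (B ^ 2 + c ^ 2 * A) := by
    have h1 : x0 ^ 2 = (A ^ 2 + A)⁻¹ / ζ ^ 2 := hx0sq
    rw [h1, hBcA]
    field_simp
  -- rewriting fN
  have hfN : ∀ N t : ℝ, fN p β ζ η ι N t
      = (N ^ (-p) + (1 / ζ ^ 2 - A * t ^ 2) ^ (p / 2)) ^ (-(1 / p)) * B * t := by
    intro N t
    have h1 : (1 / ζ ^ 2) * (1 - t ^ 2) + β ^ 2 / (β ^ 2 * η ^ 2 - ι ^ 2) * t ^ 2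
        = 1 / ζ ^ 2 - A * t ^ 2 := by rw [hA]; ring
    rw [fN, h1, hBdef]
  -- positivity of the inner function on [0,1]
  have hgpos : ∀ t : ℝ, 0 ≤ t → t ≤ 1 → 0 < 1 / ζ ^ 2 - A * t ^ 2 := by
    intro t ht0 ht1
    have ht2 : t ^ 2 ≤ 1 := by
      calc t ^ 2 ≤ 1 ^ 2 := pow_le_pow_left₀ ht0 ht1 2
        _ = 1 := one_pow 2
    have := mul_le_mul_of_nonneg_left ht2 hApos.le
    linarith only [hAB, hB, this]
  -- monotonicity of fN on [0,1]
  have hmono : ∀ N : ℝ, 0 < N → ∀ a b : ℝ, 0 ≤ a → a ≤ b → b ≤ 1 →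
      fN p β ζ η ι N a ≤ fN p β ζ η ι N b := by
    intro N hN a b ha hab hb1
    rw [hfN, hfN]
    exact fNaux_mono p ζ A B N hp hApos hB hN hgpos a b ha hab hb1
  -- exponent collapse
  have hrp : ∀ t : ℝ, 0 < t → (t ^ (p / 2)) ^ (-(1 / p) : ℝ) = t ^ (-(1 / 2) : ℝ) :=
    fun t ht => fNaux_rpow_collapse p hp t ht
  have hneg : ∀ t : ℝ, 0 < t → t ^ (-(1 / 2) : ℝ) = (Real.sqrt t)⁻¹ := by
    intro t ht
    rw [Real.rpow_neg ht.le, Real.sqrt_eq_rpow]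
  -- the limiting equation at x0
  have hg0 : 0 < 1 / ζ ^ 2 - A * x0 ^ 2 := hgpos x0 hx0pos.le hx0lt1.le
  have hsqg0 : 0 < Real.sqrt (1 / ζ ^ 2 - A * x0 ^ 2) := Real.sqrt_pos.mpr hg0
  have hsq0 : c ^ 2 * (1 / ζ ^ 2 - A * x0 ^ 2) = (B * x0) ^ 2 := by
    linear_combination hkey
  have hceq : c * Real.sqrt (1 / ζ ^ 2 - A * x0 ^ 2) = B * x0 := by
    have h1 : (c * Real.sqrt (1 / ζ ^ 2 - A * x0 ^ 2)) ^ 2 = (B * x0) ^ 2 := by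
      rw [mul_pow, Real.sq_sqrt hg0.le, hsq0]
    have h2 : 0 ≤ c * Real.sqrt (1 / ζ ^ 2 - A * x0 ^ 2) :=
      mul_nonneg hc0.le (Real.sqrt_nonneg _)
    have h3 : 0 ≤ B * x0 := mul_nonneg hB.le hx0pos.le
    have h4 := congrArg Real.sqrt h1
    rwa [Real.sqrt_sq h2, Real.sqrt_sq h3] at h4
  have hcx0 : c = (1 / ζ ^ 2 - A * x0 ^ 2) ^ (-(1 / 2) : ℝ) * B * x0 := by
    rw [hneg _ hg0]
    rw [show (Real.sqrt (1 / ζ ^ 2 - A * x0 ^ 2))⁻¹ * B * x0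
        = B * x0 / Real.sqrt (1 / ζ ^ 2 - A * x0 ^ 2) from by ring]
    rw [eq_div_iff hsqg0.ne']
    exact hceq
  -- fN N x0 < c for every N > 0
  have hflt : ∀ N : ℝ, 0 < N → fN p β ζ η ι N x0 < c := by
    intro N hN
    rw [hfN]
    calc (N ^ (-p) + (1 / ζ ^ 2 - A * x0 ^ 2) ^ (p / 2)) ^ (-(1 / p)) * B * x0
        < (1 / ζ ^ 2 - A * x0 ^ 2) ^ (-(1 / 2) : ℝ) * B * x0 :=
          fNaux_lt p ζ A B N x0 hp hN hB hx0pos hg0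
      _ = c := hcx0.symm
  -- c < limiting value at any y with x0 < y ≤ 1
  have hlt : ∀ y : ℝ, 0 < y → y ≤ 1 → x0 < y →
      c < (1 / ζ ^ 2 - A * y ^ 2) ^ (-(1 / 2) : ℝ) * B * y := by
    intro y hy0 hy1 hxy
    have hgy : 0 < 1 / ζ ^ 2 - A * y ^ 2 := hgpos y hy0.le hy1
    have hsqy : 0 < Real.sqrt (1 / ζ ^ 2 - A * y ^ 2) := Real.sqrt_pos.mpr hgy
    have hEpos : 0 < B ^ 2 + c ^ 2 * A :=
      add_pos (pow_pos hB 2) (mul_pos (pow_pos hc0 2) hApos)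
    have hy2 : x0 ^ 2 < y ^ 2 := pow_lt_pow_left₀ hxy hx0pos.le (by norm_num)
    have key := mul_lt_mul_of_pos_left hy2 hEpos
    have hsq2 : c ^ 2 * (1 / ζ ^ 2 - A * y ^ 2) < (B * y) ^ 2 := by
      have hkey2 : c ^ 2 * (1 / ζ ^ 2 - A * y ^ 2)
          = x0 ^ 2 * B ^ 2 + x0 ^ 2 * c ^ 2 * A - c ^ 2 * A * y ^ 2 := by
        linear_combination hkey
      rw [hkey2]
      have hBy : (B * y) ^ 2 = B ^ 2 * y ^ 2 := by ring
      rw [hBy]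
      linarith only [key]
    have h3 : c * Real.sqrt (1 / ζ ^ 2 - A * y ^ 2) < B * y := by
      have h4 : (c * Real.sqrt (1 / ζ ^ 2 - A * y ^ 2)) ^ 2 < (B * y) ^ 2 := by
        rw [mul_pow, Real.sq_sqrt hgy.le]; exact hsq2
      exact lt_of_pow_lt_pow_left₀ 2 (mul_nonneg hB.le hy0.le) h4
    rw [hneg _ hgy]
    rw [show (Real.sqrt (1 / ζ ^ 2 - A * y ^ 2))⁻¹ * B * y
        = B * y / Real.sqrt (1 / ζ ^ 2 - A * y ^ 2) from by ring]
    rw [lt_div_iff₀ hsqy]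
    exact h3
  -- final limit argument
  refine tendsto_order.2 ⟨?_, ?_⟩
  · -- lower bound: x0 < x N eventually
    intro a ha
    filter_upwards [eventually_gt_atTop Nthresh] with N hN
    obtain ⟨⟨hx1, hx2⟩, hfx⟩ := hx N hN
    by_contra hcon
    push_neg at hcon
    have hxa : x N ≤ x0 := hcon.trans ha.le
    have := hmono N (hNt.trans hN) (x N) x0 hx1.le hxa hx0lt1.le
    rw [hfx] at this
    have h5 := hflt N (hNt.trans hN)
    linarith only [this, h5]
  · -- upper bound: x N < b eventually
    intro b hb
    set y : ℝ := min b ((x0 + 1) / 2) with hydef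
    have hyx0 : x0 < y := lt_min hb (by linarith)
    have hy1 : y < 1 := lt_of_le_of_lt (min_le_right _ _) (by linarith)
    have hy0 : 0 < y := hx0pos.trans hyx0
    have hgy : 0 < 1 / ζ ^ 2 - A * y ^ 2 := hgpos y hy0.le hy1.le
    have hGy : 0 < (1 / ζ ^ 2 - A * y ^ 2) ^ (p / 2) := Real.rpow_pos_of_pos hgy _
    have hL : c < (1 / ζ ^ 2 - A * y ^ 2) ^ (-(1 / 2) : ℝ) * B * y :=
      hlt y hy0 hy1.le hyx0
    have htend : Tendsto (fun N : ℝ => fN p β ζ η ι N y) atTop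
        (nhds ((1 / ζ ^ 2 - A * y ^ 2) ^ (-(1 / 2) : ℝ) * B * y)) := by
      simp only [hfN]
      exact fNaux_tendsto p ζ A B y hp hgy
    have hev : ∀ᶠ N : ℝ in atTop, c < fN p β ζ η ι N y :=
      htend.eventually_const_lt hL
    filter_upwards [hev, eventually_gt_atTop Nthresh] with N h1 h2
    obtain ⟨⟨hx1, hx2⟩, hfx⟩ := hx N h2
    by_contra hcon
    push_neg at hcon
    have hyle : y ≤ x N := le_trans (min_le_left _ _) hcon
    have := hmono N (hNt.trans h2) y (x N) hy0.le hyle hx2.le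
    rw [hfx] at this
    linarith only [this, h1]

/-- limiting shear angle. With `A = 1/ζ² − β²/(β²η² − ι²) > 0`, the
solutions `x_N ∈ (0,1)` of `f_N(x_N) = c` for `N > N_thresh` converge, as `N → ∞`, to
`(A² + A)^{−1/2}/ζ`. -/
theorem shear_angle_limit (p β ζ η ι : ℝ) (hp : 0 < p) (hβ : 0 < β) (hζ : 0 < ζ)
    (hη : 0 < η) (hβηι : 0 < β ^ 2 * η ^ 2 - ι ^ 2)
    (hmat : ζ ^ 2 + ι ^ 2 / β ^ 2 < η ^ 2)
    (c : ℝ) (hc : c = ((β ^ 2 * η ^ 2 - ι ^ 2) / (β ^ 2 * ζ ^ 2) - 1)⁻¹)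
    (hcsmall : c < β * (β ^ 2 * η ^ 2 - ι ^ 2) ^ (-(1 / 2) : ℝ))
    (Nthresh : ℝ) (hNt : 0 < Nthresh)
    (hNtdef : Nthresh ^ (-p)
      = ((β ^ 2 * η ^ 2 - ι ^ 2) / (β ^ 2 * ζ ^ 2) - 1) ^ p * β ^ (2 * p)
          * (β ^ 2 * η ^ 2 - ι ^ 2) ^ (-p)
        - β ^ p * (β ^ 2 * η ^ 2 - ι ^ 2) ^ (-(p / 2)))
    (x : ℝ → ℝ)
    (hx : ∀ N : ℝ, Nthresh < N → x N ∈ Set.Ioo (0 : ℝ) 1 ∧ fN p β ζ η ι N (x N) = c)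
    (A : ℝ) (hA : A = 1 / ζ ^ 2 - β ^ 2 / (β ^ 2 * η ^ 2 - ι ^ 2)) :
    Tendsto x atTop (nhds ((A ^ 2 + A) ^ (-(1 / 2) : ℝ) / ζ)) :=
  shear_angle_limit_aux p β ζ η ι hp hβ hζ hη hβηι hmat c hc hcsmall Nthresh hNt hNtdef x hx A hA
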